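/- Let q ≥ 2 and let α ∈ ℂ with α ≠ 0. Define f(z) = 1/2 − (1/α + 1/α^q)·g(z) + (1/α^{q+1})·g(z²), where g(z) = Σ_{i≥0}(−1)^i z^{q^i}. Then f(z) + f(z^q) = (1 − z/α)(1 − z/α^q) as formal power series, and consequently f(α) + f(α^q) = 0 whenever 0 < |α| < 1 (so that the series converge at α and α^q). -/

import Mathlib

open PowerSeries
open scoped Classical

/-- Substitution `z ↦ z^m` in a formal power series. -/
noncomputable def psSubstPow (m : ℕ) (g : PowerSeries ℂ) : PowerSeries ℂ :=
  PowerSeries.mk fun n => if m ∣ n then PowerSeries.coeff (n / m) g else 0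

/-- With `g(z) = Σ (−1)^i z^{q^i}` and
`f(z) = 1/2 − (1/α + 1/α^q) g(z) + (1/α^{q+1}) g(z²)`, one has
`f(z) + f(z^q) = (1 − z/α)(1 − z/α^q)`, and hence `f(α) + f(α^q) = 0`
when `0 < |α| < 1`. -/
theorem stmt8 (q : ℕ) (hq : 2 ≤ q) (α : ℂ) (hα : α ≠ 0)
    (g f : PowerSeries ℂ)
    (hg : g = PowerSeries.mk fun n =>
      if ∃ i : ℕ, q ^ i = n then (-1 : ℂ) ^ (Nat.log q n) else 0)
    (hf : f = PowerSeries.C (1/2) - PowerSeries.C (1/α + 1/α^q) * g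
      + PowerSeries.C (1/α^(q+1)) * psSubstPow 2 g) :
    f + psSubstPow q f =
      (1 - PowerSeries.C (1/α) * PowerSeries.X) *
        (1 - PowerSeries.C (1/α^q) * PowerSeries.X) ∧
    (0 < ‖α‖ → ‖α‖ < 1 →
      (∑' n : ℕ, PowerSeries.coeff n f * α ^ n) +
        (∑' n : ℕ, PowerSeries.coeff n f * (α ^ q) ^ n) = 0) := by
  have hq1 : 1 < q := hq
  have hq0 : q ≠ 0 := by omega
  -- coefficient of psSubstPow
  have hc : ∀ (m n : ℕ) (h : PowerSeries ℂ),
      coeff n (psSubstPow m h) = if m ∣ n then coeff (n/m) h else 0 := by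
    intro m n h; simp [psSubstPow, coeff_mk]
  -- additivity
  have hadd : ∀ (m : ℕ) (a b : PowerSeries ℂ),
      psSubstPow m (a + b) = psSubstPow m a + psSubstPow m b := by
    intro m a b; ext n; rw [map_add, hc, hc, hc]; split <;> simp
  have hsub : ∀ (m : ℕ) (a b : PowerSeries ℂ),
      psSubstPow m (a - b) = psSubstPow m a - psSubstPow m b := by
    intro m a b; ext n; rw [map_sub, hc, hc, hc]; split <;> simp
  have hCmul : ∀ (m : ℕ) (c : ℂ) (a : PowerSeries ℂ),
      psSubstPow m (PowerSeries.C c * a) = PowerSeries.C c * psSubstPow m a := by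
    intro m c a; ext n; rw [coeff_C_mul, hc, hc]; split <;> simp [coeff_C_mul]
  have hCc : ∀ (m : ℕ) (c : ℂ), psSubstPow m (PowerSeries.C c) = PowerSeries.C c := by
    intro m c; ext n; rw [hc, coeff_C, coeff_C]
    by_cases hn : n = 0
    · subst hn; simp
    · rw [if_neg hn]
      split
      · rename_i hd
        rw [if_neg]
        intro h0
        have := Nat.div_mul_cancel hd
        rw [h0, zero_mul] at this
        exact hn this.symm
      · rfl
  have hcomp : ∀ (a b : ℕ), a ≠ 0 → ∀ (h : PowerSeries ℂ),
      psSubstPow a (psSubstPow b h) = psSubstPow (a*b) h := by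
    intro a b ha h; ext n
    rw [hc (a*b) n h, hc a n]
    by_cases hab : a*b ∣ n
    · have hd : a ∣ n := (Dvd.intro b rfl).trans hab
      rw [if_pos hab, if_pos hd, hc, if_pos ((Nat.dvd_div_iff_mul_dvd hd).mpr hab),
          Nat.div_div_eq_div_mul]
    · rw [if_neg hab]
      by_cases hd : a ∣ n
      · rw [if_pos hd, hc, if_neg (fun hb => hab ((Nat.dvd_div_iff_mul_dvd hd).mp hb))]
      · rw [if_neg hd]
  -- key: g + g(z^q) = z
  have key : g + psSubstPow q g = PowerSeries.X := by
    ext n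
    rw [map_add, hc, hg, PowerSeries.coeff_X]
    simp only [coeff_mk]
    by_cases hn1 : n = 1
    · subst hn1
      have h0 : ∃ i : ℕ, q ^ i = 1 := ⟨0, pow_zero q⟩
      have hnd : ¬ q ∣ 1 := by
        intro h; have := Nat.le_of_dvd one_pos h; omega
      simp [h0, hnd]
    · rw [if_neg hn1]
      by_cases he : ∃ i : ℕ, q ^ i = n
      · obtain ⟨i, rfl⟩ := he
        have hi : i ≠ 0 := by rintro rfl; simp at hn1
        obtain ⟨j, rfl⟩ := Nat.exists_eq_succ_of_ne_zero hi
        have hd : q ∣ q ^ (j+1) := dvd_pow_self q (Nat.succ_ne_zero j)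
        have hdiv : q ^ (j+1) / q = q ^ j := by
          rw [pow_succ]; exact Nat.mul_div_cancel _ (by omega)
        rw [if_pos ⟨j+1, rfl⟩, if_pos hd, hdiv, if_pos ⟨j, rfl⟩,
            Nat.log_pow hq1, Nat.log_pow hq1, pow_succ]
        ring
      · rw [if_neg he]
        by_cases hd : q ∣ n
        · rw [if_pos hd, if_neg]
          · ring
          · rintro ⟨i, hi⟩
            exact he ⟨i+1, by rw [pow_succ, hi]; exact Nat.div_mul_cancel hd⟩
        · rw [if_neg hd]; ring
  -- S_2 X = X^2
  have hX2 : psSubstPow 2 PowerSeries.X = PowerSeries.X ^ 2 := by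
    ext n
    rw [hc, PowerSeries.coeff_X, PowerSeries.coeff_X_pow]
    split_ifs <;> first | rfl | omega
  -- expand psSubstPow q f
  have hS : psSubstPow q f = PowerSeries.C (1/2)
      - PowerSeries.C (1/α + 1/α^q) * psSubstPow q g
      + PowerSeries.C (1/α^(q+1)) * psSubstPow 2 (psSubstPow q g) := by
    rw [hf, hadd, hsub, hCc, hCmul, hCmul, hcomp q 2 hq0, Nat.mul_comm,
        ← hcomp 2 q (by omega)]
  have hA : PowerSeries.C (1/2) + PowerSeries.C (1/2) = (1 : PowerSeries ℂ) := by
    rw [← map_add]; norm_num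
  have h2 : psSubstPow 2 g + psSubstPow 2 (psSubstPow q g) = PowerSeries.X ^ 2 := by
    rw [← hadd, key, hX2]
  have hfsum : f + psSubstPow q f = 1 - PowerSeries.C (1/α + 1/α^q) * PowerSeries.X
      + PowerSeries.C (1/α^(q+1)) * PowerSeries.X ^ 2 := by
    rw [hS, hf]
    linear_combination (PowerSeries.C (1/α^(q+1))) * h2
      - PowerSeries.C (1/α + 1/α^q) * key + hA
  have hαq : α ^ q ≠ 0 := pow_ne_zero q hα
  have hmain : f + psSubstPow q f =
      (1 - PowerSeries.C (1/α) * PowerSeries.X) *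
        (1 - PowerSeries.C (1/α^q) * PowerSeries.X) := by
    rw [hfsum]
    have e1 : (1:ℂ)/α^(q+1) = (1/α) * (1/α^q) := by
      rw [pow_succ]; field_simp
    rw [map_add, e1, map_mul]
    ring
  refine ⟨hmain, fun h0 h1 => ?_⟩
  -- analytic part
  have hgb : ∀ n, ‖coeff n g‖ ≤ 1 := by
    intro n; rw [hg, coeff_mk]
    split
    · rw [norm_pow, norm_neg, norm_one, one_pow]
    · simp
  have hsgb : ∀ n, ‖coeff n (psSubstPow 2 g)‖ ≤ 1 := by
    intro n; rw [hc]; split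
    · exact hgb _
    · simp
  set M : ℝ := 1/2 + ‖(1:ℂ)/α + 1/α^q‖ + ‖(1:ℂ)/α^(q+1)‖ with hM
  have hM0 : 0 ≤ M := by positivity
  have hfb : ∀ n, ‖coeff n f‖ ≤ M := by
    intro n
    rw [hf, map_add, map_sub, coeff_C, coeff_C_mul, coeff_C_mul]
    refine le_trans (norm_add_le _ _) ?_
    refine le_trans (add_le_add_left (norm_sub_le _ _) _) ?_
    rw [hM]
    gcongr
    · split <;> norm_num
    · rw [norm_mul]
      calc ‖(1:ℂ)/α + 1/α^q‖ * ‖coeff n g‖ ≤ ‖(1:ℂ)/α + 1/α^q‖ * 1 := by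
            gcongr; exact hgb n
        _ = _ := mul_one _
    · rw [norm_mul]
      calc ‖(1:ℂ)/α^(q+1)‖ * ‖coeff n (psSubstPow 2 g)‖ ≤ ‖(1:ℂ)/α^(q+1)‖ * 1 := by
            gcongr; exact hsgb n
        _ = _ := mul_one _
  have hSb : ∀ n, ‖coeff n (psSubstPow q f)‖ ≤ M := by
    intro n; rw [hc]; split
    · exact hfb _
    · simpa using hM0
  have hαn : ‖α‖ < 1 := h1
  have hsummable : ∀ (F : PowerSeries ℂ), (∀ n, ‖coeff n F‖ ≤ M) →
      Summable (fun n => coeff n F * α ^ n) := by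
    intro F hF
    refine Summable.of_norm_bounded (g := fun n => M * ‖α‖^n)
      ((summable_geometric_of_lt_one (norm_nonneg α) hαn).mul_left M) (fun n => ?_)
    rw [norm_mul, norm_pow]
    exact mul_le_mul_of_nonneg_right (hF n) (by positivity)
  have hsf := hsummable f hfb
  have hsS := hsummable (psSubstPow q f) hSb
  -- reindex
  have hiq : Function.Injective (fun k : ℕ => q * k) := fun a b h => by
    exact Nat.eq_of_mul_eq_mul_left (by omega) h
  have hrange : Function.support (fun n => coeff n (psSubstPow q f) * α ^ n)
      ⊆ Set.range (fun k : ℕ => q * k) := by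
    intro n hn
    rw [Function.mem_support] at hn
    by_contra hr
    apply hn
    show coeff n (psSubstPow q f) * α ^ n = 0
    rw [hc, if_neg, zero_mul]
    rintro ⟨k, hk⟩
    exact hr ⟨k, hk.symm⟩
  have e2 : (∑' n : ℕ, coeff n f * (α ^ q) ^ n)
      = ∑' n : ℕ, coeff n (psSubstPow q f) * α ^ n := by
    rw [← Function.Injective.tsum_eq hiq hrange]
    apply tsum_congr
    intro k
    rw [hc, if_pos (Dvd.intro k rfl), Nat.mul_div_cancel_left k (by omega), ← pow_mul]
  have e3 : (∑' n : ℕ, coeff n f * α ^ n) + (∑' n : ℕ, coeff n (psSubstPow q f) * α ^ n)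
      = ∑' n : ℕ, coeff n (f + psSubstPow q f) * α ^ n := by
    rw [← Summable.tsum_add hsf hsS]
    apply tsum_congr
    intro n
    rw [map_add, add_mul]
  have hcoeffP : ∀ n, coeff n (f + psSubstPow q f) =
      (if n = 0 then 1 else 0) - (if n = 1 then (1/α + 1/α^q) else 0)
        + (if n = 2 then (1/α^(q+1)) else 0) := by
    intro n
    rw [hfsum, map_add, map_sub, coeff_one, coeff_C_mul, coeff_C_mul,
        PowerSeries.coeff_X, PowerSeries.coeff_X_pow]
    split_ifs <;> ring
  have e4 : (∑' n : ℕ, coeff n (f + psSubstPow q f) * α ^ n)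
      = ∑ n ∈ Finset.range 3, coeff n (f + psSubstPow q f) * α ^ n := by
    refine tsum_eq_sum (fun b hb => ?_)
    rw [Finset.mem_range, not_lt] at hb
    rw [hcoeffP]
    have h0 : b ≠ 0 := by omega
    have h1' : b ≠ 1 := by omega
    have h2' : b ≠ 2 := by omega
    rw [if_neg h0, if_neg h1', if_neg h2']
    ring
  rw [e2, e3, e4]
  rw [Finset.sum_range_succ, Finset.sum_range_succ, Finset.sum_range_one,
      hcoeffP, hcoeffP, hcoeffP]
  norm_num
  rw [pow_succ]
  field_simp
  ring
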